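/- Let 𝒜 be a finite Frobenius R-R-bimodule with homogeneous weight w of average value γ, extended additively to 𝒜^n. Let M be an R-submodule of 𝒜^n and x ∈ 𝒜^n. Then ∑_{c ∈ M} w(x + c) = γ·|M|·|supp(M)| + |M|·w(π_{supp(M)}(x)), where supp(M) = { i : ∃ z ∈ M, z_i ≠ 0 } and π_{supp(M)}(x) is x punctured to the coordinates outside supp(M). -/
import Mathlib


open Finset MulOpposite
open scoped Classical BigOperators

/-- key lemma. For a finite Frobenius `R`-`R`-bimodule `𝒜` with homogeneous
weight `w` of average value `γ` (given via a generating character), an `R`-submodule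
`M ≤ 𝒜^n` and `x ∈ 𝒜^n`:
`∑_{c ∈ M} w(x + c) = γ·|M|·|supp M| + |M|·w(π_{supp M}(x))`. -/
theorem stmt6 {R A : Type*} [Ring R] [Fintype R] [DecidableEq R]
    [AddCommGroup A] [Module R A] [Module Rᵐᵒᵖ A] [SMulCommClass R Rᵐᵒᵖ A] [Fintype A]
    (χ : AddChar A ℂ)
    (hgenL : ∀ N : Submodule R A, (∀ x ∈ N, χ x = 1) → N = ⊥)
    (hgenR : ∀ N : Submodule Rᵐᵒᵖ A, (∀ x ∈ N, χ x = 1) → N = ⊥)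
    (hcard : Fintype.card A = Fintype.card R)
    (γ : ℝ) (w : A → ℝ)
    (hw : ∀ a : A, (w a : ℂ) =
      (γ : ℂ) * (1 - (Fintype.card Rˣ : ℂ)⁻¹ * ∑ u : Rˣ, χ (op (u : R) • a)))
    (n : ℕ) (M : Submodule R (Fin n → A)) (x : Fin n → A) :
    ∑ c : M, ∑ i, w (x i + (c : Fin n → A) i) =
      γ * (Nat.card M : ℝ) * ((univ.filter fun i : Fin n => ∃ z ∈ M, z i ≠ 0).card : ℝ) +
        (Nat.card M : ℝ) *
          ∑ i ∈ univ \ (univ.filter fun i : Fin n => ∃ z ∈ M, z i ≠ 0), w (x i) := by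
  classical
  -- the support
  set S : Finset (Fin n) := univ.filter fun i : Fin n => ∃ z ∈ M, z i ≠ 0 with hSdef
  -- key vanishing of character sums on supported coordinates
  have hzero : ∀ i : Fin n, (∃ z ∈ M, z i ≠ 0) → ∀ u : Rˣ,
      ∑ c : M, χ (op (u : R) • (c : Fin n → A) i) = 0 := by
    intro i hi u
    obtain ⟨z, hzM, hz⟩ := hi
    have hex : ∃ c : M, χ (op (u : R) • (c : Fin n → A) i) ≠ 1 := by
      by_contra h
      push_neg at h
      set f : (Fin n → A) →ₗ[R] A :=
        { toFun := fun c => op (u : R) • c i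
          map_add' := by intro a b; simp [smul_add]
          map_smul' := by intro r a; simp [smul_comm] } with hfdef
      have hbot : M.map f = ⊥ := by
        refine hgenL _ ?_
        rintro a ⟨c, hc, rfl⟩
        exact h ⟨c, hc⟩
      have hzi : f z = 0 := by
        have hmem : f z ∈ M.map f := ⟨z, hzM, rfl⟩
        simpa [hbot] using hmem
      have hz0 : z i = 0 := by
        have h2 : (op ((u⁻¹ : Rˣ) : R)) • (op ((u : Rˣ) : R) • z i) = z i := by
          rw [smul_smul, ← op_mul, Units.mul_inv, op_one, one_smul]
        have : op ((u : Rˣ) : R) • z i = 0 := hzi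
        rw [this, smul_zero] at h2
        exact h2.symm
      exact hz hz0
    obtain ⟨c₀, hc₀⟩ := hex
    have hre : ∑ c : M, χ (op (u : R) • ((c₀ + c : M) : Fin n → A) i)
        = ∑ c : M, χ (op (u : R) • (c : Fin n → A) i) :=
      Fintype.sum_equiv (Equiv.addLeft c₀) _ _ (fun c => rfl)
    have hlhs : ∀ c : M, χ (op (u : R) • ((c₀ + c : M) : Fin n → A) i)
        = χ (op (u : R) • (c₀ : Fin n → A) i) * χ (op (u : R) • (c : Fin n → A) i) := by
      intro c
      have hco : ((c₀ + c : M) : Fin n → A) i = (c₀ : Fin n → A) i + (c : Fin n → A) i := rfl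
      rw [hco, smul_add, AddChar.map_add_eq_mul]
    rw [Finset.sum_congr rfl (fun c _ => hlhs c), ← Finset.mul_sum] at hre
    have h0 : (χ (op (u : R) • (c₀ : Fin n → A) i) - 1) *
        ∑ c : M, χ (op (u : R) • (c : Fin n → A) i) = 0 := by
      linear_combination hre
    rcases mul_eq_zero.mp h0 with h | h
    · exact absurd (sub_eq_zero.mp h) hc₀
    · exact h
  -- coordinatewise evaluation on supported coordinates
  have hterm1 : ∀ i ∈ S, ∑ c : M, w (x i + (c : Fin n → A) i) = γ * (Nat.card M : ℝ) := by
    intro i hi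
    have hi' : ∃ z ∈ M, z i ≠ 0 := by
      simpa [hSdef] using hi
    have hC : ((∑ c : M, w (x i + (c : Fin n → A) i) : ℝ) : ℂ)
        = ((γ * (Nat.card M : ℝ) : ℝ) : ℂ) := by
      push_cast
      calc ∑ c : M, (w (x i + (c : Fin n → A) i) : ℂ)
          = ∑ c : M, (γ : ℂ) * (1 - (Fintype.card Rˣ : ℂ)⁻¹ *
              ∑ u : Rˣ, χ (op (u : R) • x i) * χ (op (u : R) • (c : Fin n → A) i)) := by
            refine Finset.sum_congr rfl fun c _ => ?_
            rw [hw]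
            simp only [smul_add, AddChar.map_add_eq_mul]
        _ = (γ : ℂ) * ((Fintype.card M : ℂ) - (Fintype.card Rˣ : ℂ)⁻¹ *
              ∑ u : Rˣ, χ (op (u : R) • x i) * ∑ c : M, χ (op (u : R) • (c : Fin n → A) i)) := by
            rw [← Finset.mul_sum, Finset.sum_sub_distrib, Finset.sum_const,
              ← Finset.mul_sum, Finset.sum_comm]
            simp [Finset.mul_sum]
        _ = (γ : ℂ) * (Nat.card M : ℂ) := by
            simp [hzero i hi', Nat.card_eq_fintype_card]
    exact_mod_cast hC
  -- coordinatewise evaluation off the support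
  have hterm2 : ∀ i ∈ univ \ S, ∑ c : M, w (x i + (c : Fin n → A) i)
      = (Nat.card M : ℝ) * w (x i) := by
    intro i hi
    have hi' : ∀ z ∈ M, z i = 0 := by
      have := (Finset.mem_sdiff.mp hi).2
      simp only [hSdef, Finset.mem_filter, Finset.mem_univ, true_and, not_exists] at this
      intro z hz
      by_contra hne
      exact this z ⟨hz, hne⟩
    have : ∀ c : M, w (x i + (c : Fin n → A) i) = w (x i) := by
      intro c
      rw [hi' c c.2, add_zero]
    rw [Finset.sum_congr rfl (fun c _ => this c), Finset.sum_const,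
      Nat.card_eq_fintype_card, nsmul_eq_mul]
    simp
  rw [Finset.sum_comm]
  rw [← Finset.sum_sdiff (Finset.subset_univ S)]
  rw [Finset.sum_congr rfl hterm2, Finset.sum_congr rfl hterm1, Finset.sum_const,
    ← Finset.mul_sum, nsmul_eq_mul]
  ring
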